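/- Let A ⊆ ℕ be a classical normal set and let n, m ∈ ℕ be coprime. Then both the set nA + mA = {n·a + m·b : a, b ∈ A} and the set (nA − mA) ∩ ℕ = {n·a − m·b : a, b ∈ A, n·a > m·b} have asymptotic density 1 in ℕ, i.e., for each of these sets V one has |V ∩ {1,…,N}|/N → 1 as N → ∞. -/

import Mathlib

open Filter

/- `A ⊆ ℕ` is a classical normal set. -/
open scoped Classical in
def ClassicalNormalSet (A : Set ℕ) : Prop :=
  ∀ K : Finset ℕ, K.Nonempty → (∀ k ∈ K, 0 < k) → ∀ B : ℕ → Bool,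
    Tendsto
      (fun n =>
        (((Finset.Icc 1 n).filter (fun m => ∀ k ∈ K, (k + m ∈ A ↔ B k = true))).card : ℝ) / n)
      atTop (nhds ((1 / 2 : ℝ) ^ K.card))

/- `V ⊆ ℕ` has asymptotic density `1`: `|V ∩ {1,…,N}|/N → 1`. -/
open scoped Classical in
def HasDensityOne (V : Set ℕ) : Prop :=
  Tendsto (fun N => (((Finset.Icc 1 N).filter (· ∈ V)).card : ℝ) / N) atTop (nhds 1)

open scoped Classical


lemma avoid_density {A : Set ℕ} (hA : ClassicalNormalSet A) (K : Finset ℕ) (hK : K.Nonempty)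
    (hpos : ∀ k ∈ K, 0 < k) :
    Tendsto (fun M => (((Finset.Icc 1 M).filter (fun c => ∀ k ∈ K, k + c ∉ A)).card : ℝ) / M)
      atTop (nhds ((1/2 : ℝ) ^ K.card)) := by
  have h := hA K hK hpos (fun _ => false)
  refine h.congr fun M => ?_
  congr 2
  exact congrArg Finset.card (Finset.filter_congr fun c _ => by simp)

lemma exists_in_class {A : Set ℕ} (hA : ClassicalNormalSet A) (q r N : ℕ) (hq : 0 < q) :
    ∃ x, N < x ∧ x ∈ A ∧ x % q = r % q := by
  by_contra hcon
  push_neg at hcon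
  have h := hA (Finset.Icc 1 q) ⟨1, Finset.mem_Icc.mpr ⟨le_refl 1, hq⟩⟩ (fun k hk => (Finset.mem_Icc.mp hk).1)
    (fun _ => true)
  haveI : NeZero q := ⟨hq.ne'⟩
  have hb : ∀ M : ℕ, (((Finset.Icc 1 M).filter
      (fun c => ∀ k ∈ Finset.Icc 1 q, (k + c ∈ A ↔ true = true))).card) ≤ N := by
    intro M
    have hsub : ((Finset.Icc 1 M).filter
        (fun c => ∀ k ∈ Finset.Icc 1 q, (k + c ∈ A ↔ true = true))) ⊆ Finset.Icc 1 N := by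
      intro c hc
      rw [Finset.mem_filter, Finset.mem_Icc] at hc
      obtain ⟨⟨hc1, _⟩, hc3⟩ := hc
      rw [Finset.mem_Icc]
      refine ⟨hc1, ?_⟩
      by_contra hcN
      push_neg at hcN
      -- choose k
      set k : ℕ := (((r : ZMod q) - (c : ZMod q) - 1).val + 1) with hk
      have hkq : k ∈ Finset.Icc 1 q := by
        rw [Finset.mem_Icc]
        constructor
        · omega
        · have := ZMod.val_lt ((r : ZMod q) - (c : ZMod q) - 1)
          omega
      have hkA : k + c ∈ A := (hc3 k hkq).mpr rfl
      have hmod : (k + c) % q = r % q := by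
        have : ((k + c : ℕ) : ZMod q) = (r : ZMod q) := by
          push_cast [hk]
          rw [ZMod.natCast_val, ZMod.cast_id]
          ring
        exact (ZMod.natCast_eq_natCast_iff _ _ _).mp this
      exact hcon (k + c) (by omega) hkA hmod
    calc _ ≤ (Finset.Icc 1 N).card := Finset.card_le_card hsub
    _ = N := by simp
  have h0 : Tendsto (fun M : ℕ =>
      ((((Finset.Icc 1 M).filter
        (fun c => ∀ k ∈ Finset.Icc 1 q, (k + c ∈ A ↔ true = true))).card : ℝ)) / M)
      atTop (nhds 0) := by
    apply squeeze_zero (fun M => by positivity) (g := fun M : ℕ => (N : ℝ) / M)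
    · intro M
      rcases Nat.eq_zero_or_pos M with hM | hM
      · simp [hM]
      · have hcN : ((((Finset.Icc 1 M).filter
            (fun c => ∀ k ∈ Finset.Icc 1 q, (k + c ∈ A ↔ true = true))).card : ℝ)) ≤ N := by
          exact_mod_cast hb M
        gcongr
    · exact tendsto_const_nhds.div_atTop tendsto_natCast_atTop_atTop
  have := tendsto_nhds_unique h h0
  have hpow : (0:ℝ) < (1/2 : ℝ) ^ (Finset.Icc 1 q).card := by positivity
  rw [this] at hpow
  exact lt_irrefl _ hpow


lemma exists_finset_in_class {A : Set ℕ} (hA : ClassicalNormalSet A) (q r : ℕ) (hq : 0 < q)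
    (J : ℕ) : ∃ D : Finset ℕ, D.card = J ∧ (∀ x ∈ D, x ∈ A) ∧ ∀ x ∈ D, x % q = r % q := by
  induction J with
  | zero => exact ⟨∅, by simp⟩
  | succ J ih =>
    obtain ⟨D, hc, hDA, hDr⟩ := ih
    obtain ⟨x, hx1, hx2, hx3⟩ := exists_in_class hA q r (D.sup id) hq
    have hxD : x ∉ D := fun hxD => absurd (Finset.le_sup (f := id) hxD) (by simpa using hx1)
    refine ⟨insert x D, ?_, ?_, ?_⟩
    · rw [Finset.card_insert_of_notMem hxD, hc]
    · intro y hy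
      rcases Finset.mem_insert.mp hy with h | h
      · exact h ▸ hx2
      · exact hDA y h
    · intro y hy
      rcases Finset.mem_insert.mp hy with h | h
      · exact h ▸ hx3
      · exact hDr y h

lemma exists_mul_mod (a q t : ℕ) (hq : 0 < q) (h : Nat.Coprime a q) :
    ∃ α, (a * α) % q = t % q := by
  haveI : NeZero q := ⟨hq.ne'⟩
  refine ⟨(((ZMod.unitOfCoprime a h)⁻¹ : (ZMod q)ˣ) * (t : ZMod q)).val, ?_⟩
  have : ((a * (((ZMod.unitOfCoprime a h)⁻¹ : (ZMod q)ˣ) * (t : ZMod q)).val : ℕ) : ZMod q)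
      = (t : ZMod q) := by
    push_cast
    rw [ZMod.natCast_val, ZMod.cast_id]
    have ha : (a : ZMod q) = ((ZMod.unitOfCoprime a h : (ZMod q)ˣ) : ZMod q) :=
      (ZMod.coe_unitOfCoprime a h).symm
    rw [ha, ← mul_assoc, ← Units.val_mul, mul_inv_cancel, Units.val_one, one_mul]
  exact (ZMod.natCast_eq_natCast_iff _ _ _).mp this

set_option maxHeartbeats 1000000 in
lemma schema {A : Set ℕ} (hA : ClassicalNormalSet A) (V : Set ℕ) (q : ℕ) (hq : 0 < q)
    (H : ∀ J : ℕ, ∀ s : ℕ, ∃ (K : Finset ℕ) (φ : ℕ → ℕ) (C : ℕ),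
      K.Nonempty ∧ (∀ k ∈ K, 0 < k) ∧ J ≤ K.card ∧
      (∀ v, v % q = s % q → C ≤ v → v ∉ V →
        1 ≤ φ v ∧ q * φ v ≤ v + C ∧ ∀ k ∈ K, k + φ v ∉ A) ∧
      (∀ v w, v % q = s % q → w % q = s % q → C ≤ v → C ≤ w → v ∉ V → w ∉ V →
        φ v = φ w → v = w)) :
    HasDensityOne V := by
  have hg : Tendsto (fun N : ℕ => (((Finset.Icc 1 N).filter (fun v => v ∉ V)).card : ℝ) / N)
      atTop (nhds 0) := by
    rw [NormedAddCommGroup.tendsto_nhds_zero]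
    intro ε hε
    obtain ⟨J, hJ⟩ : ∃ J : ℕ, (1/2 : ℝ) ^ J < ε :=
      exists_pow_lt_of_lt_one hε (by norm_num)
    choose K φ C h1 h2 h3 h4 h5 using H J
    set M : ℕ → ℕ → ℕ := fun s N => (N + C s) / q with hM
    set cnt : ℕ → ℕ → ℕ := fun s N =>
      ((Finset.Icc 1 (M s N)).filter (fun c => ∀ k ∈ K s, k + c ∉ A)).card with hcnt
    -- counting inequality
    have hcount : ∀ N : ℕ, ((Finset.Icc 1 N).filter (fun v => v ∉ V)).card ≤
        ∑ s ∈ Finset.range q, (C s + cnt s N) := by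
      intro N
      set F := (Finset.Icc 1 N).filter (fun v => v ∉ V) with hF
      have hfib : F.card = ∑ s ∈ Finset.range q, (F.filter (fun v => v % q = s)).card := by
        apply Finset.card_eq_sum_card_fiberwise
        intro v _
        exact Finset.mem_range.mpr (Nat.mod_lt v hq)
      rw [hfib]
      apply Finset.sum_le_sum
      intro s hs
      have hsq : s % q = s := Nat.mod_eq_of_lt (Finset.mem_range.mp hs)
      set Fs := F.filter (fun v => v % q = s) with hFs
      have hsplit : Fs.card = (Fs.filter (fun v => v < C s)).card
          + (Fs.filter (fun v => ¬ v < C s)).card :=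
        (Finset.card_filter_add_card_filter_not _).symm
      rw [hsplit]
      have hb1 : (Fs.filter (fun v => v < C s)).card ≤ C s := by
        calc (Fs.filter (fun v => v < C s)).card ≤ (Finset.range (C s)).card := by
              apply Finset.card_le_card
              intro v hv
              rw [Finset.mem_filter] at hv
              exact Finset.mem_range.mpr hv.2
          _ = C s := Finset.card_range _
      have hb2 : (Fs.filter (fun v => ¬ v < C s)).card ≤ cnt s N := by
        apply Finset.card_le_card_of_injOn (φ s)
        · intro v hv
          simp only [hFs, hF, Finset.mem_coe, Finset.mem_filter, Finset.mem_Icc, not_lt] at hv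
          obtain ⟨⟨⟨⟨hv1, hvN⟩, hvV⟩, hvs⟩, hvC⟩ := hv
          have hmod : v % q = s % q := by rw [hvs, hsq]
          obtain ⟨hφ1, hφ2, hφ3⟩ := h4 s v hmod hvC hvV
          rw [Finset.mem_coe, Finset.mem_filter, Finset.mem_Icc]
          refine ⟨⟨hφ1, ?_⟩, hφ3⟩
          rw [hM]
          rw [Nat.le_div_iff_mul_le hq, mul_comm]
          calc q * φ s v ≤ v + C s := hφ2
            _ ≤ N + C s := by omega
        · intro v hv w hw hvw
          simp only [hFs, hF, Finset.mem_coe, Finset.mem_filter, Finset.mem_Icc, not_lt] at hv hw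
          obtain ⟨⟨⟨⟨_, _⟩, hvV⟩, hvs⟩, hvC⟩ := hv
          obtain ⟨⟨⟨⟨_, _⟩, hwV⟩, hws⟩, hwC⟩ := hw
          exact h5 s v w (by rw [hvs, hsq]) (by rw [hws, hsq]) hvC hwC hvV hwV hvw
      omega
    -- limits
    have hMtop : ∀ s, Tendsto (fun N => M s N) atTop atTop := by
      intro s
      apply tendsto_atTop_atTop.mpr
      intro b
      refine ⟨q * b, fun N hN => ?_⟩
      rw [hM, Nat.le_div_iff_mul_le hq, mul_comm]
      omega
    have hMoverN : ∀ s, Tendsto (fun N : ℕ => (M s N : ℝ) / N) atTop (nhds (1 / q)) := by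
      intro s
      have hq0 : (0:ℝ) < q := by exact_mod_cast hq
      apply tendsto_of_tendsto_of_tendsto_of_le_of_le'
        (g := fun N : ℕ => 1/(q:ℝ) - 1/N) (h := fun N : ℕ => 1/(q:ℝ) + (C s : ℝ)/N)
      · have : Tendsto (fun N : ℕ => (1:ℝ)/N) atTop (nhds 0) :=
          tendsto_const_nhds.div_atTop tendsto_natCast_atTop_atTop
        simpa using tendsto_const_nhds.sub this
      · have : Tendsto (fun N : ℕ => (C s : ℝ)/N) atTop (nhds 0) :=
          tendsto_const_nhds.div_atTop tendsto_natCast_atTop_atTop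
        simpa using tendsto_const_nhds.add this
      · filter_upwards [eventually_ge_atTop 1] with N hN
        have hN0 : (0:ℝ) < N := by exact_mod_cast hN
        have e2 : ((N : ℝ) + C s) < q * (M s N) + q := by
          have h1 := Nat.div_add_mod (N + C s) q
          have h2 := Nat.mod_lt (N + C s) hq
          have h3 : (N + C s : ℕ) < q * ((N + C s) / q) + q := by omega
          have h4 : M s N = (N + C s) / q := rfl
          rw [h4]
          exact_mod_cast h3
        rw [sub_le_iff_le_add, ← add_div, div_le_div_iff₀ hq0 hN0]
        nlinarith [e2]
      · filter_upwards [eventually_ge_atTop 1] with N hN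
        have hN0 : (0:ℝ) < N := by exact_mod_cast Nat.lt_of_lt_of_le Nat.zero_lt_one hN
        have hq1 : (1:ℝ) ≤ q := by exact_mod_cast hq
        have e1 : (q:ℝ) * (M s N) ≤ (N:ℝ) + C s := by
          have h' : M s N * q ≤ N + C s := Nat.div_mul_le_self _ _
          have h'' : (M s N : ℝ) * q ≤ (N:ℝ) + C s := by exact_mod_cast h'
          linarith
        rw [div_add_div _ _ hq0.ne' hN0.ne', div_le_div_iff₀ hN0 (by positivity)]
        have hC0 : (0:ℝ) ≤ (C s : ℝ) := by positivity
        nlinarith [mul_le_mul_of_nonneg_right e1 hN0.le,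
          mul_nonneg (mul_nonneg (sub_nonneg.mpr hq1) hC0) hN0.le]
    have hcntN : ∀ s ∈ Finset.range q, Tendsto (fun N : ℕ => (cnt s N : ℝ) / N) atTop
        (nhds ((1/2 : ℝ) ^ (K s).card * (1 / q))) := by
      intro s _
      have hav := (avoid_density hA (K s) (h1 s) (h2 s)).comp (hMtop s)
      have := hav.mul (hMoverN s)
      apply this.congr'
      filter_upwards [(hMtop s).eventually_ge_atTop 1, eventually_ge_atTop 1] with N hMN hN
      have hM0 : (0:ℝ) < (M s N : ℝ) := by exact_mod_cast hMN
      have key : ∀ (x y z : ℝ), 0 < y → x / y * (y / z) = x / z := fun x y z hy => by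
        rw [div_mul_div_comm, mul_comm x y, mul_div_mul_left _ _ hy.ne']
      exact key _ _ _ hM0
    -- total
    have htot : Tendsto (fun N : ℕ => ∑ s ∈ Finset.range q, ((C s : ℝ)/N + (cnt s N : ℝ)/N))
        atTop (nhds (∑ s ∈ Finset.range q, ((0:ℝ) + (1/2 : ℝ) ^ (K s).card * (1 / q)))) := by
      apply tendsto_finset_sum
      intro s hs
      exact (tendsto_const_nhds.div_atTop tendsto_natCast_atTop_atTop).add (hcntN s hs)
    have hL : (∑ s ∈ Finset.range q, ((0:ℝ) + (1/2 : ℝ) ^ (K s).card * (1 / q))) < ε := by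
      have hq0 : (0:ℝ) < q := by exact_mod_cast hq
      calc (∑ s ∈ Finset.range q, ((0:ℝ) + (1/2 : ℝ) ^ (K s).card * (1 / q)))
          ≤ ∑ s ∈ Finset.range q, (1/2 : ℝ) ^ J * (1 / q) := by
            apply Finset.sum_le_sum
            intro s hs
            rw [zero_add]
            apply mul_le_mul_of_nonneg_right _ (by positivity)
            exact pow_le_pow_of_le_one (by norm_num) (by norm_num) (h3 s)
        _ = q * ((1/2 : ℝ) ^ J * (1/q)) := by
            rw [Finset.sum_const, Finset.card_range, nsmul_eq_mul]
        _ = (1/2 : ℝ) ^ J := by field_simp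
        _ < ε := hJ
    have hev := htot.eventually_lt_const hL
    filter_upwards [hev, eventually_ge_atTop 1] with N hN1 hN2
    have hN0 : (0:ℝ) < N := by exact_mod_cast hN2
    have hgN : (((Finset.Icc 1 N).filter (fun v => v ∉ V)).card : ℝ) / N ≤
        ∑ s ∈ Finset.range q, ((C s : ℝ)/N + (cnt s N : ℝ)/N) := by
      have := hcount N
      have hcast : (((Finset.Icc 1 N).filter (fun v => v ∉ V)).card : ℝ) ≤
          ∑ s ∈ Finset.range q, ((C s : ℝ) + (cnt s N : ℝ)) := by
        exact_mod_cast this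
      calc (((Finset.Icc 1 N).filter (fun v => v ∉ V)).card : ℝ) / N
          ≤ (∑ s ∈ Finset.range q, ((C s : ℝ) + (cnt s N : ℝ))) / N := by gcongr
        _ = ∑ s ∈ Finset.range q, ((C s : ℝ)/N + (cnt s N : ℝ)/N) := by
            rw [Finset.sum_div]
            congr 1
            ext s
            rw [add_div]
    rw [Real.norm_eq_abs, abs_of_nonneg (by positivity)]
    exact lt_of_le_of_lt hgN hN1
  -- conclude
  have key : (fun N : ℕ => (((Finset.Icc 1 N).filter (· ∈ V)).card : ℝ) / N) =ᶠ[atTop]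
      (fun N : ℕ => 1 - (((Finset.Icc 1 N).filter (fun v => v ∉ V)).card : ℝ) / N) := by
    filter_upwards [eventually_ge_atTop 1] with N hN
    have hN0 : (0:ℝ) < N := by exact_mod_cast hN
    have hsum : ((Finset.Icc 1 N).filter (· ∈ V)).card
        + ((Finset.Icc 1 N).filter (fun v => v ∉ V)).card = N := by
      rw [Finset.card_filter_add_card_filter_not]
      simp
    have : (((Finset.Icc 1 N).filter (· ∈ V)).card : ℝ) =
        (N : ℝ) - (((Finset.Icc 1 N).filter (fun v => v ∉ V)).card : ℝ) := by
      have h' : (((Finset.Icc 1 N).filter (· ∈ V)).card : ℝ)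
          + (((Finset.Icc 1 N).filter (fun v => v ∉ V)).card : ℝ) = N := by
        exact_mod_cast hsum
      linarith
    rw [this, sub_div, div_self hN0.ne']
  rw [HasDensityOne]
  have : Tendsto (fun N : ℕ =>
      1 - (((Finset.Icc 1 N).filter (fun v => v ∉ V)).card : ℝ) / N) atTop (nhds 1) := by
    simpa using tendsto_const_nhds.sub hg
  exact this.congr' key.symm

lemma app1 {A : Set ℕ} (hA : ClassicalNormalSet A) (n m : ℕ) (hn : 0 < n) (hm : 0 < m)
    (hco : Nat.Coprime n m) :
    HasDensityOne {v : ℕ | ∃ a ∈ A, ∃ b ∈ A, v = n * a + m * b} := by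
  apply schema hA _ m hm
  intro J s
  obtain ⟨α, hα⟩ := exists_mul_mod n m s hm hco
  obtain ⟨D, hDc, hDA, hDr⟩ := exists_finset_in_class hA m α hm (J+1)
  have hne : D.Nonempty := Finset.card_pos.mp (by rw [hDc]; omega)
  set aJ := D.max' hne with haJdef
  have haJr : aJ % m = α % m := hDr aJ (D.max'_mem hne)
  have hu : ∀ a ∈ D, aJ = a + m * ((aJ - a) / m) := by
    intro a haD
    have hle : a ≤ aJ := Finset.le_max' D a haD
    have hmod : a % m = aJ % m := by rw [hDr a haD, haJr]
    have hdvd : m ∣ aJ - a := (Nat.modEq_iff_dvd' hle).mp hmod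
    rw [Nat.mul_div_cancel' hdvd]
    omega
  have hvmod : ∀ v, v % m = s % m → (n * aJ + m) % m = v % m := by
    intro v hv
    have h1 : (n * aJ) % m = (n * α) % m := Nat.ModEq.mul_left n haJr
    rw [Nat.add_mod_right, h1, hα, hv]
  have hrec : ∀ v, v % m = s % m → n * aJ + 2 * m ≤ v →
      1 ≤ (v - (n * aJ + m)) / m ∧ v = m * ((v - (n * aJ + m)) / m) + (n * aJ + m) := by
    intro v hv hvC
    have hle2 : n * aJ + m ≤ v :=
      le_trans (Nat.add_le_add_left (by omega) (n * aJ)) hvC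
    have hdvd : m ∣ v - (n * aJ + m) := (Nat.modEq_iff_dvd' hle2).mp (hvmod v hv)
    obtain ⟨w, hw⟩ := hdvd
    have heq : v = m * w + (n * aJ + m) := (Nat.sub_eq_iff_eq_add hle2).mp hw
    have hφ : (v - (n * aJ + m)) / m = w := by rw [hw, Nat.mul_div_cancel_left _ hm]
    have h1w : 1 ≤ w := by
      rcases Nat.eq_zero_or_pos w with h0 | h
      · exfalso
        rw [h0, Nat.mul_zero, Nat.zero_add] at heq
        have h2 : n * aJ + 2 * m ≤ n * aJ + m := heq ▸ hvC
        omega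
      · exact h
    rw [hφ]
    exact ⟨h1w, heq⟩
  refine ⟨D.image (fun a => n * ((aJ - a) / m) + 1), fun v => (v - (n * aJ + m)) / m,
    n * aJ + 2 * m, ?_, ?_, ?_, ?_, ?_⟩
  · exact hne.image _
  · intro k hk
    obtain ⟨a, _, rfl⟩ := Finset.mem_image.mp hk
    omega
  · rw [Finset.card_image_of_injOn, hDc]
    · omega
    · intro a haD b hbD hab
      have h1 : n * ((aJ - a) / m) = n * ((aJ - b) / m) := by
        have := hab
        simp only [Nat.add_right_cancel_iff] at this
        exact this
      have h2 : (aJ - a) / m = (aJ - b) / m := Nat.eq_of_mul_eq_mul_left hn h1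
      have h3 := hu a haD
      have h4 := hu b hbD
      rw [h2] at h3
      exact Nat.add_right_cancel (h3.symm.trans h4)
  · intro v hv hvC hvV
    obtain ⟨h1w, heq⟩ := hrec v hv hvC
    refine ⟨h1w, ?_, ?_⟩
    · calc m * ((v - (n * aJ + m)) / m) ≤ v := by
            conv_rhs => rw [heq]
            exact Nat.le_add_right _ _
        _ ≤ v + (n * aJ + 2 * m) := Nat.le_add_right _ _
    · intro k hk
      obtain ⟨a, haD, rfl⟩ := Finset.mem_image.mp hk
      intro hbA
      apply hvV
      refine ⟨a, hDA a haD, n * ((aJ - a) / m) + 1 + (v - (n * aJ + m)) / m, hbA, ?_⟩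
      have h3 := hu a haD
      calc v = m * ((v - (n * aJ + m)) / m) + (n * aJ + m) := heq
        _ = m * ((v - (n * aJ + m)) / m) + (n * (a + m * ((aJ - a) / m)) + m) := by rw [← h3]
        _ = n * a + m * (n * ((aJ - a) / m) + 1 + (v - (n * aJ + m)) / m) := by ring
  · intro v w hv hw hvC hwC _ _ hφ
    have h1 := (hrec v hv hvC).2
    have h2 := (hrec w hw hwC).2
    have hφ' : (v - (n * aJ + m)) / m = (w - (n * aJ + m)) / m := hφ
    rw [h1, hφ']
    exact h2.symm

lemma app2 {A : Set ℕ} (hA : ClassicalNormalSet A) (n m : ℕ) (hn : 0 < n) (hm : 0 < m)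
    (hco : Nat.Coprime n m) :
    HasDensityOne {v : ℕ | ∃ a ∈ A, ∃ b ∈ A, m * b < n * a ∧ v = n * a - m * b} := by
  apply schema hA _ n hn
  intro J s
  obtain ⟨β, hβ⟩ := exists_mul_mod m n (n - s % n) hn hco.symm
  obtain ⟨D, hDc, hDA, hDr⟩ := exists_finset_in_class hA n β hn (J+1)
  have hne : D.Nonempty := Finset.card_pos.mp (by rw [hDc]; omega)
  set b1 := D.min' hne with hb1def
  have hb1r : b1 % n = β % n := hDr b1 (D.min'_mem hne)
  have hu : ∀ b ∈ D, b = b1 + n * ((b - b1) / n) := by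
    intro b hbD
    have hle : b1 ≤ b := Finset.min'_le D b hbD
    have hmod : b1 % n = b % n := by rw [hDr b hbD, hb1r]
    have hdvd : n ∣ b - b1 := (Nat.modEq_iff_dvd' hle).mp hmod
    rw [Nat.mul_div_cancel' hdvd]
    omega
  have hdvd : ∀ v, v % n = s % n → n ∣ v + m * b1 := by
    intro v hv
    have h1 : (v + m * b1) % n = (v + m * β) % n :=
      Nat.ModEq.add_left v (Nat.ModEq.mul_left m hb1r)
    have h2 : (v + m * β) % n = (s + (n - s % n)) % n := Nat.ModEq.add hv hβ
    have h3 : (s + (n - s % n)) % n = 0 := by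
      have hr : s % n < n := Nat.mod_lt _ hn
      have h4 : s + (n - s % n) ≡ s % n + (n - s % n) [MOD n] :=
        Nat.ModEq.add_right _ (Nat.mod_modEq s n).symm
      have h5 : s % n + (n - s % n) = n := by omega
      have h6 : s + (n - s % n) ≡ n [MOD n] := h4.trans (by rw [h5])
      calc (s + (n - s % n)) % n = n % n := h6
        _ = 0 := Nat.mod_self n
    exact Nat.dvd_of_mod_eq_zero ((h1.trans h2).trans h3)
  have hrec : ∀ v, v % n = s % n → 2 * n + m * b1 ≤ v →
      ∃ w, 1 ≤ w ∧ v + m * b1 = n * w + n ∧ (v + m * b1 - n) / n = w := by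
    intro v hv hvC
    obtain ⟨w', hw'⟩ := hdvd v hv
    have hge : 2 * n ≤ v + m * b1 := by
      calc 2 * n ≤ v := hvC.trans' (Nat.le_add_right _ _)
        _ ≤ v + m * b1 := Nat.le_add_right _ _
    rcases w' with _ | w
    · exfalso; omega
    · have hw2 : v + m * b1 = n * w + n := by rw [hw']; ring
      refine ⟨w, ?_, hw2, ?_⟩
      · by_contra hcon
        have hw0 : w = 0 := by omega
        rw [hw0] at hw2
        omega
      · have hsub : v + m * b1 - n = n * w := by omega
        rw [hsub, Nat.mul_div_cancel_left _ hn]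
  refine ⟨D.image (fun b => m * ((b - b1) / n) + 1), fun v => (v + m * b1 - n) / n,
    2 * n + m * b1, ?_, ?_, ?_, ?_, ?_⟩
  · exact hne.image _
  · intro k hk
    obtain ⟨b, _, rfl⟩ := Finset.mem_image.mp hk
    omega
  · rw [Finset.card_image_of_injOn, hDc]
    · omega
    · intro a haD b hbD hab
      have h1 : m * ((a - b1) / n) = m * ((b - b1) / n) := by
        have := hab
        simp only [Nat.add_right_cancel_iff] at this
        exact this
      have h2 : (a - b1) / n = (b - b1) / n := Nat.eq_of_mul_eq_mul_left hm h1
      have h3 := hu a haD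
      have h4 := hu b hbD
      rw [h2] at h3
      exact (h3.trans h4.symm)
  · intro v hv hvC hvV
    obtain ⟨w, h1w, heq, hφ⟩ := hrec v hv hvC
    beta_reduce
    rw [hφ]
    refine ⟨h1w, ?_, ?_⟩
    · calc n * w ≤ v + m * b1 := by omega
        _ ≤ v + (2 * n + m * b1) := by omega
    · intro k hk
      obtain ⟨b, hbD, rfl⟩ := Finset.mem_image.mp hk
      intro haA
      apply hvV
      have hb := hu b hbD
      have hna : n * (m * ((b - b1) / n) + 1 + w) = v + m * b := by
        calc n * (m * ((b - b1) / n) + 1 + w) = m * (n * ((b - b1) / n)) + (n * w + n) := by ring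
          _ = m * (n * ((b - b1) / n)) + (v + m * b1) := by rw [heq]
          _ = v + m * (b1 + n * ((b - b1) / n)) := by ring
          _ = v + m * b := by rw [← hb]
      refine ⟨m * ((b - b1) / n) + 1 + w, haA, b, hDA b hbD, ?_, ?_⟩
      · rw [hna]
        have hv1 : 1 ≤ v := by omega
        omega
      · rw [hna]
        omega
  · intro v w hv hw hvC hwC _ _ hφ
    obtain ⟨wv, _, heqv, hφv⟩ := hrec v hv hvC
    obtain ⟨ww, _, heqw, hφw⟩ := hrec w hw hwC
    have hφ' : (v + m * b1 - n) / n = (w + m * b1 - n) / n := hφ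
    rw [hφv, hφw] at hφ'
    rw [hφ'] at heqv
    omega

/- If `A ⊆ ℕ` is a classical normal set and `n, m` are coprime positive integers,
then both `nA + mA = {n a + m b : a, b ∈ A}` and
`(nA − mA) ∩ ℕ = {n a − m b : a, b ∈ A, n a > m b}` have asymptotic density `1`. -/
theorem nA_pm_mA_density_one
    (A : Set ℕ) (hA : ClassicalNormalSet A)
    (n m : ℕ) (hn : 0 < n) (hm : 0 < m) (hco : Nat.Coprime n m) :
    HasDensityOne {v : ℕ | ∃ a ∈ A, ∃ b ∈ A, v = n * a + m * b} ∧
    HasDensityOne {v : ℕ | ∃ a ∈ A, ∃ b ∈ A, m * b < n * a ∧ v = n * a - m * b} :=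
  ⟨app1 hA n m hn hm hco, app2 hA n m hn hm hco⟩
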